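/- Let α > -1, let n ≥ 1 be an integer, let μ, η ∈ ℂ with |μ| = |η| = 1, let φ : 𝔻 → 𝔻 be analytic, let m ≥ 1 be an integer, and let g be analytic on 𝔻 with g(0) ≠ 0. Define ψ(z) = z^m·g(z). If for all z, w ∈ 𝔻, μ·p·ψ(z)·(ηw)^n / (1 - ηw·φ(z))^{n+α+2} = μ·p·ψ(w)·(ηz)^n / (1 - η·φ(w)·z)^{n+α+2}, then m = n. -/

import Mathlib

open ComplexConjugate Filter Topology Set

private lemma slit_of_lt_one {c : ℂ} (h : ‖c‖ < 1) :
    (1 - c) ∈ Complex.slitPlane := by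
  rw [Complex.mem_slitPlane_iff]
  left
  have h2 := abs_le.mp ((Complex.abs_re_le_norm c).trans h.le)
  have h3 : c.re < 1 := lt_of_le_of_lt (le_trans (le_abs_self _) (Complex.abs_re_le_norm c)) h
  simp only [Complex.sub_re, Complex.one_re]
  linarith

private lemma ne_zero_of_lt_one {c : ℂ} (h : ‖c‖ < 1) : (1 - c) ≠ 0 := by
  intro h0
  have : c = 1 := by linear_combination -h0
  simp [this] at h

private lemma cpow_ne {x y : ℂ} (hx : x ≠ 0) : x ^ y ≠ 0 := by
  simp [Complex.cpow_eq_zero_iff, hx]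

private lemma key_aux (u v : ℂ → ℂ)
    (hu : ContinuousWithinAt u (Metric.ball (0 : ℂ) 1) 0)
    (hv : ContinuousWithinAt v (Metric.ball (0 : ℂ) 1) 0)
    (k : ℕ) (hk : 1 ≤ k)
    (h : ∀ z ∈ Metric.ball (0 : ℂ) 1 \ {0}, u z = z ^ k * v z) : u 0 = 0 := by
  have h1 : Metric.ball (0 : ℂ) 1 ∈ 𝓝 (0 : ℂ) := Metric.ball_mem_nhds _ one_pos
  have hN : (𝓝[Metric.ball (0 : ℂ) 1 \ {0}] (0 : ℂ)).NeBot := by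
    have heq : 𝓝[Metric.ball (0 : ℂ) 1 \ {0}] (0 : ℂ) = 𝓝[{(0 : ℂ)}ᶜ] 0 := by
      rw [Set.diff_eq, Set.inter_comm]
      exact nhdsWithin_inter_of_mem' (mem_nhdsWithin_of_mem_nhds h1)
    rw [heq]; infer_instance
  have hle : 𝓝[Metric.ball (0 : ℂ) 1 \ {0}] (0 : ℂ) ≤ 𝓝[Metric.ball (0 : ℂ) 1] 0 :=
    nhdsWithin_mono _ Set.diff_subset
  have t1 : Tendsto u (𝓝[Metric.ball (0 : ℂ) 1 \ {0}] 0) (𝓝 (u 0)) := hu.mono_left hle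
  have t2 : Tendsto (fun z : ℂ => z ^ k * v z) (𝓝[Metric.ball (0 : ℂ) 1 \ {0}] 0)
      (𝓝 ((0 : ℂ) ^ k * v 0)) := by
    exact ((continuousWithinAt_id.pow k).mul hv).mono_left hle
  have h0 : ((0 : ℂ) ^ k * v 0) = 0 := by
    rw [zero_pow (by omega), zero_mul]
  rw [h0] at t2
  have : Tendsto u (𝓝[Metric.ball (0 : ℂ) 1 \ {0}] 0) (𝓝 0) := by
    refine t2.congr' ?_
    filter_upwards [self_mem_nhdsWithin] with z hz
    exact (h z hz).symm
  exact tendsto_nhds_unique t1 this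

/-- If `ψ(z) = z^m g(z)` with `g(0) ≠ 0` and the reproducing-kernel identity for
complex symmetry of `D_{n,ψ,φ}` with conjugation `C_{μ,η}` holds on `A²_α`,
then `m = n`. -/
theorem stmt3 (α : ℝ) (hα : -1 < α) (n : ℕ) (hn : 1 ≤ n) (μ η : ℂ)
    (hμ : ‖μ‖ = 1) (hη : ‖η‖ = 1)
    (φ g : ℂ → ℂ)
    (hφ : DifferentiableOn ℂ φ (Metric.ball (0 : ℂ) 1))
    (hφmap : ∀ z ∈ Metric.ball (0 : ℂ) 1, φ z ∈ Metric.ball (0 : ℂ) 1)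
    (hg : DifferentiableOn ℂ g (Metric.ball (0 : ℂ) 1))
    (hg0 : g 0 ≠ 0)
    (m : ℕ) (hm : 1 ≤ m)
    (ψ : ℂ → ℂ) (hψdef : ∀ z ∈ Metric.ball (0 : ℂ) 1, ψ z = z ^ m * g z)
    (p : ℂ) (hp : p = ∏ j ∈ Finset.range n, ((α : ℂ) + 2 + j))
    (heq : ∀ z ∈ Metric.ball (0 : ℂ) 1, ∀ w ∈ Metric.ball (0 : ℂ) 1,
      μ * p * ψ z * (η * w) ^ n / (1 - η * w * φ z) ^ ((n : ℂ) + α + 2)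
        = μ * p * ψ w * (η * z) ^ n / (1 - η * φ w * z) ^ ((n : ℂ) + α + 2)) :
    m = n := by
  by_contra hmn
  set s : ℂ := (n : ℂ) + α + 2 with hs
  -- basic nonvanishing
  have hμ0 : μ ≠ 0 := by intro h; simp [h] at hμ
  have hη0 : η ≠ 0 := by intro h; simp [h] at hη
  have hp0 : p ≠ 0 := by
    rw [hp]
    apply Finset.prod_ne_zero_iff.mpr
    intro j _
    have : ((α : ℂ) + 2 + j) = ((α + 2 + j : ℝ) : ℂ) := by push_cast; ring
    rw [this]
    have hj : (0:ℝ) ≤ (j:ℝ) := Nat.cast_nonneg j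
    exact_mod_cast (by linarith : (0:ℝ) < α + 2 + j).ne' -- α > -1 needed
  -- choose w
  have hgc : ContinuousWithinAt g (Metric.ball (0 : ℂ) 1) 0 :=
    (hg.continuousOn) 0 (by simp)
  have hgabs : 0 < ‖g 0‖ := by simpa using hg0
  obtain ⟨δ, hδpos, hδ⟩ := Metric.continuousWithinAt_iff.mp hgc (‖g 0‖) hgabs
  set w : ℂ := (((min δ 1) / 2 : ℝ) : ℂ) with hw
  have hmin : 0 < min δ 1 := lt_min hδpos one_pos
  have hw0 : w ≠ 0 := by
    simp only [hw, ne_eq, Complex.ofReal_eq_zero]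
    positivity
  have hwball : w ∈ Metric.ball (0 : ℂ) 1 := by
    simp only [Metric.mem_ball, dist_zero_right, hw, Complex.norm_real, Real.norm_eq_abs,
      abs_of_pos (by positivity : (0:ℝ) < min δ 1 / 2)]
    have := min_le_right δ 1
    linarith
  have hgw : g w ≠ 0 := by
    have hd : dist w 0 < δ := by
      simp only [dist_zero_right, hw, Complex.norm_real, Real.norm_eq_abs,
        abs_of_pos (by positivity : (0:ℝ) < min δ 1 / 2)]
      have := min_le_left δ 1
      linarith
    have := hδ hwball hd
    intro h0
    rw [h0, dist_zero_left] at this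
    exact lt_irrefl _ this
  have hψw : ψ w ≠ 0 := by
    rw [hψdef w hwball]
    exact mul_ne_zero (pow_ne_zero _ hw0) hgw
  -- denominators
  have hφ0 : ∀ z ∈ Metric.ball (0 : ℂ) 1, ‖η * w * φ z‖ < 1 := by
    intro z hz
    have h1 : ‖φ z‖ < 1 := by
      have := hφmap z hz; simpa [Metric.mem_ball, Complex.dist_eq] using this
    have h2 : ‖w‖ < 1 := by simpa [Metric.mem_ball, Complex.dist_eq] using hwball
    calc ‖η * w * φ z‖ = ‖w‖ * ‖φ z‖ := by
          simp [map_mul, hη]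
      _ < 1 := by nlinarith [norm_nonneg w, norm_nonneg (φ z)]
  have hφw0 : ∀ z ∈ Metric.ball (0 : ℂ) 1, ‖η * φ w * z‖ < 1 := by
    intro z hz
    have h1 : ‖φ w‖ < 1 := by
      have := hφmap w hwball; simpa [Metric.mem_ball, Complex.dist_eq] using this
    have h2 : ‖z‖ < 1 := by simpa [Metric.mem_ball, Complex.dist_eq] using hz
    calc ‖η * φ w * z‖ = ‖φ w‖ * ‖z‖ := by
          simp [map_mul, hη]
      _ < 1 := by nlinarith [norm_nonneg z, norm_nonneg (φ w)]
  -- the two auxiliary functions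
  set u : ℂ → ℂ := fun z => μ * p * g z * (η * w) ^ n * (1 - η * φ w * z) ^ s with hu_def
  set v : ℂ → ℂ := fun z => μ * p * ψ w * η ^ n * (1 - η * w * φ z) ^ s with hv_def
  -- key equation
  have keyeq : ∀ z ∈ Metric.ball (0 : ℂ) 1, z ^ m * u z = z ^ n * v z := by
    intro z hz
    have h := heq z hz w hwball
    rw [div_eq_div_iff (cpow_ne (ne_zero_of_lt_one (hφ0 z hz)))
      (cpow_ne (ne_zero_of_lt_one (hφw0 z hz)))] at h
    rw [hψdef z hz] at h
    simp only [hu_def, hv_def]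
    linear_combination h
  -- continuity
  have hφc : ContinuousWithinAt φ (Metric.ball (0 : ℂ) 1) 0 :=
    (hφ.continuousOn) 0 (by simp)
  have hD2 : ContinuousWithinAt (fun z : ℂ => (1 - η * φ w * z) ^ s)
      (Metric.ball (0 : ℂ) 1) 0 := by
    refine Filter.Tendsto.cpow ?_ tendsto_const_nhds (slit_of_lt_one (hφw0 0 (by simp)))
    exact (continuousWithinAt_const.sub (continuousWithinAt_const.mul continuousWithinAt_id))
  have hD1 : ContinuousWithinAt (fun z : ℂ => (1 - η * w * φ z) ^ s)
      (Metric.ball (0 : ℂ) 1) 0 := by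
    refine Filter.Tendsto.cpow ?_ tendsto_const_nhds (slit_of_lt_one (hφ0 0 (by simp)))
    exact (continuousWithinAt_const.sub (continuousWithinAt_const.mul hφc))
  have hu : ContinuousWithinAt u (Metric.ball (0 : ℂ) 1) 0 :=
    ((continuousWithinAt_const.mul hgc).mul continuousWithinAt_const).mul hD2
  have hv : ContinuousWithinAt v (Metric.ball (0 : ℂ) 1) 0 :=
    continuousWithinAt_const.mul hD1
  -- nonvanishing at 0
  have hu0 : u 0 ≠ 0 := by
    simp only [hu_def]
    exact mul_ne_zero (mul_ne_zero (mul_ne_zero (mul_ne_zero hμ0 hp0) hg0)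
      (pow_ne_zero _ (mul_ne_zero hη0 hw0)))
      (cpow_ne (ne_zero_of_lt_one (hφw0 0 (by simp))))
  have hv0 : v 0 ≠ 0 := by
    simp only [hv_def]
    exact mul_ne_zero (mul_ne_zero (mul_ne_zero (mul_ne_zero hμ0 hp0) hψw)
      (pow_ne_zero _ hη0)) (cpow_ne (ne_zero_of_lt_one (hφ0 0 (by simp))))
  rcases lt_or_gt_of_ne hmn with hlt | hgt
  · -- m < n : u 0 = 0, contradiction
    refine hu0 (key_aux u v hu hv (n - m) (by omega) ?_)
    intro z hz
    have h := keyeq z hz.1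
    have hz0 : z ≠ 0 := hz.2
    have hzm : z ^ m ≠ 0 := pow_ne_zero _ hz0
    refine mul_left_cancel₀ hzm ?_
    rw [show n = m + (n - m) from (Nat.add_sub_cancel' hlt.le).symm, pow_add] at h
    linear_combination h
  · -- n < m : v 0 = 0, contradiction
    refine hv0 (key_aux v u hv hu (m - n) (by omega) ?_)
    intro z hz
    have h := keyeq z hz.1
    have hz0 : z ≠ 0 := hz.2
    have hzn : z ^ n ≠ 0 := pow_ne_zero _ hz0
    refine mul_left_cancel₀ hzn ?_
    rw [show m = n + (m - n) from (Nat.add_sub_cancel' hgt.le).symm, pow_add] at h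
    linear_combination -h
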